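/- The average sufficient statistic t̄ lies on the relative boundary relbd(C) of the polytope C if and only if the empirical KLIEP loss ℓ is bounded from below but does not attain a global minimum (i.e., there is M ∈ ℝ with ℓ(Δ) ≥ M for all Δ, yet no Δ₀ satisfies ℓ(Δ₀) ≤ ℓ(Δ) for all Δ). (Theorem 1(ii).) -/

import Mathlib

open scoped RealInnerProductSpace

open Set Finset


section Aux

variable {k n : ℕ}

private lemma fin_nonempty (hn : 1 ≤ n) : Nonempty (Fin n) := ⟨⟨0, hn⟩⟩

private lemma sum_exp_pos (hn : 1 ≤ n) (x : Fin n → ℝ) :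
    0 < ∑ j, Real.exp (x j) := by
  have : Nonempty (Fin n) := fin_nonempty hn
  exact Finset.sum_pos (fun j _ => Real.exp_pos _) Finset.univ_nonempty

private lemma exists_weights {tbar : EuclideanSpace ℝ (Fin k)}
    {t : Fin n → EuclideanSpace ℝ (Fin k)}
    (h : tbar ∈ convexHull ℝ (Set.range t)) :
    ∃ w : Fin n → ℝ, (∀ j, 0 ≤ w j) ∧ ∑ j, w j = 1 ∧ ∑ j, w j • t j = tbar := by
  rw [convexHull_range_eq_exists_affineCombination] at h
  obtain ⟨s, w, hw₀, hw₁, hw⟩ := h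
  refine ⟨fun i => if i ∈ s then w i else 0, fun j => by by_cases h : j ∈ s <;> simp [h, hw₀ j], ?_, ?_⟩
  · rw [Finset.sum_ite_mem, Finset.univ_inter, hw₁]
  · rw [← hw, Finset.affineCombination_eq_linear_combination s t w hw₁]
    simp only [ite_smul, zero_smul]
    rw [Finset.sum_ite_mem, Finset.univ_inter]

end Aux



/-- The empirical KLIEP loss
`ℓ(Δ) = -⟪Δ, t̄⟫ + log((1/n) ∑_j exp ⟪Δ, t_j⟫)`. -/
noncomputable def kliepLoss {k n : ℕ} (tbar : EuclideanSpace ℝ (Fin k))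
    (t : Fin n → EuclideanSpace ℝ (Fin k)) (Δ : EuclideanSpace ℝ (Fin k)) : ℝ :=
  -⟪Δ, tbar⟫ + Real.log ((1 / (n : ℝ)) * ∑ j, Real.exp ⟪Δ, t j⟫)


section Aux2

variable {k n : ℕ} (hn : 1 ≤ n) (tbar : EuclideanSpace ℝ (Fin k))
  (t : Fin n → EuclideanSpace ℝ (Fin k))
include hn

private lemma kliepLoss_eq_log (Δ : EuclideanSpace ℝ (Fin k)) :
    kliepLoss tbar t Δ = Real.log ((1 / (n : ℝ)) * ∑ j, Real.exp ⟪Δ, t j - tbar⟫) := by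
  have hnpos : (0:ℝ) < (n:ℝ) := by exact_mod_cast hn
  have h1 : ∀ j, Real.exp ⟪Δ, t j⟫ = Real.exp ⟪Δ, tbar⟫ * Real.exp ⟪Δ, t j - tbar⟫ := by
    intro j
    rw [← Real.exp_add, inner_sub_right]
    ring_nf
  have hpos : (0:ℝ) < ∑ j, Real.exp ⟪Δ, t j - tbar⟫ := sum_exp_pos hn _
  simp only [kliepLoss, h1, ← Finset.mul_sum]
  rw [show (1 / (n:ℝ)) * (Real.exp ⟪Δ, tbar⟫ * ∑ j, Real.exp ⟪Δ, t j - tbar⟫)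
      = Real.exp ⟪Δ, tbar⟫ * ((1 / (n:ℝ)) * ∑ j, Real.exp ⟪Δ, t j - tbar⟫) by ring]
  rw [Real.log_mul (Real.exp_ne_zero _) (by positivity), Real.log_exp]
  ring

/-- L1 : bounded below when `tbar ∈ C`. -/
private lemma kliepLoss_bddBelow (h : tbar ∈ convexHull ℝ (Set.range t))
    (Δ : EuclideanSpace ℝ (Fin k)) : -Real.log n ≤ kliepLoss tbar t Δ := by
  have hnpos : (0:ℝ) < (n:ℝ) := by exact_mod_cast hn
  obtain ⟨w, hw₀, hw₁, hw⟩ := exists_weights h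
  have hpos : (0:ℝ) < ∑ j, Real.exp ⟪Δ, t j - tbar⟫ := sum_exp_pos hn _
  rw [kliepLoss_eq_log hn tbar t Δ]
  have hzero : ∑ j, w j * ⟪Δ, t j - tbar⟫ = 0 := by
    have : ⟪Δ, ∑ j, w j • (t j - tbar)⟫ = ∑ j, w j * ⟪Δ, t j - tbar⟫ := by
      rw [inner_sum]
      exact Finset.sum_congr rfl fun j _ => real_inner_smul_right _ _ _
    rw [← this]
    have : ∑ j, w j • (t j - tbar) = 0 := by
      simp only [smul_sub, Finset.sum_sub_distrib, ← Finset.sum_smul, hw₁, hw, one_smul,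
        sub_self]
    rw [this, inner_zero_right]
  -- Jensen : 1 = exp 0 = exp (∑ w x) ≤ ∑ w exp x ≤ ∑ exp x
  have jensen : Real.exp (∑ j, w j * ⟪Δ, t j - tbar⟫) ≤
      ∑ j, w j * Real.exp ⟪Δ, t j - tbar⟫ := by
    have := convexOn_exp.map_sum_le (t := Finset.univ) (w := w)
      (p := fun j => ⟪Δ, t j - tbar⟫) (fun j _ => hw₀ j) hw₁ (fun j _ => Set.mem_univ _)
    simpa [smul_eq_mul] using this
  have h2 : (1:ℝ) ≤ ∑ j, Real.exp ⟪Δ, t j - tbar⟫ := by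
    calc (1:ℝ) = Real.exp 0 := by simp
    _ ≤ ∑ j, w j * Real.exp ⟪Δ, t j - tbar⟫ := by rw [← hzero]; exact jensen
    _ ≤ ∑ j, Real.exp ⟪Δ, t j - tbar⟫ := by
        refine Finset.sum_le_sum fun j _ => ?_
        nlinarith [Real.exp_pos (⟪Δ, t j - tbar⟫), hw₀ j,
          Finset.single_le_sum (f := w) (fun i _ => hw₀ i) (Finset.mem_univ j), hw₁.le]
  calc -Real.log n = Real.log ((1 / (n:ℝ)) * 1) := by
        rw [mul_one, one_div, Real.log_inv]
  _ ≤ _ := Real.log_le_log (by positivity)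
      (by have : (0:ℝ) < 1 / (n:ℝ) := by positivity
          nlinarith)

end Aux2

section Aux3

variable {k n : ℕ} (hn : 1 ≤ n) {tbar : EuclideanSpace ℝ (Fin k)}
  {t : Fin n → EuclideanSpace ℝ (Fin k)}
include hn

/-- L2 : unbounded below when `tbar ∉ C`. -/
private lemma kliepLoss_unbounded (h : tbar ∉ convexHull ℝ (Set.range t)) (M : ℝ) :
    ∃ Δ, kliepLoss tbar t Δ < M := by
  have hnpos : (0:ℝ) < (n:ℝ) := by exact_mod_cast hn
  have hcl : IsClosed (convexHull ℝ (Set.range t)) :=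
    ((Set.finite_range t).isCompact_convexHull ℝ).isClosed
  obtain ⟨f, u, hfu, hu⟩ := geometric_hahn_banach_closed_point
    (convex_convexHull ℝ _) hcl h
  set v : EuclideanSpace ℝ (Fin k) := (InnerProductSpace.toDual ℝ _).symm f with hv
  have hinner : ∀ z, ⟪v, z⟫ = f z := fun z => InnerProductSpace.toDual_symm_apply
  have hc : 0 < f tbar - u := sub_pos.mpr hu
  set s : ℝ := (|M| + 1) / (f tbar - u) with hs
  have hs0 : 0 ≤ s := by positivity
  refine ⟨s • v, ?_⟩
  have hb : ∀ j, Real.exp ⟪s • v, t j⟫ ≤ Real.exp (s * u) := by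
    intro j
    rw [Real.exp_le_exp, real_inner_smul_left, hinner]
    have : f (t j) ≤ u := (hfu _ (subset_convexHull ℝ _ (Set.mem_range_self j))).le
    exact mul_le_mul_of_nonneg_left this hs0
  have hsum : ∑ j, Real.exp ⟪s • v, t j⟫ ≤ (n:ℝ) * Real.exp (s * u) := by
    calc ∑ j, Real.exp ⟪s • v, t j⟫ ≤ ∑ _j : Fin n, Real.exp (s * u) :=
          Finset.sum_le_sum fun j _ => hb j
    _ = (n:ℝ) * Real.exp (s * u) := by simp [mul_comm]
  have hlog : Real.log ((1 / (n:ℝ)) * ∑ j, Real.exp ⟪s • v, t j⟫) ≤ s * u := by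
    calc Real.log ((1 / (n:ℝ)) * ∑ j, Real.exp ⟪s • v, t j⟫)
        ≤ Real.log ((1 / (n:ℝ)) * ((n:ℝ) * Real.exp (s * u))) := by
          apply Real.log_le_log
          · have := sum_exp_pos hn (fun j => ⟪s • v, t j⟫); positivity
          · have : (0:ℝ) < 1 / (n:ℝ) := by positivity
            nlinarith [sum_exp_pos hn (fun j => ⟪s • v, t j⟫)]
    _ = Real.log (Real.exp (s * u)) := by
          congr 1; field_simp
    _ = s * u := Real.log_exp _
  have : kliepLoss tbar t (s • v) ≤ -(|M| + 1) := by
    unfold kliepLoss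
    have h1 : ⟪s • v, tbar⟫ = s * f tbar := by rw [real_inner_smul_left, hinner]
    have h2 : s * (f tbar - u) = |M| + 1 := by
      rw [hs]; field_simp
    nlinarith [hlog]
  refine lt_of_le_of_lt this ?_
  cases' abs_cases M with hM hM <;> linarith

/-- L5 : strict decrease direction when a supporting functional exists. -/
private lemma kliepLoss_strict_decrease {v : EuclideanSpace ℝ (Fin k)}
    (hle : ∀ j, ⟪v, t j⟫ ≤ ⟪v, tbar⟫) {j₀ : Fin n} (hlt : ⟪v, t j₀⟫ < ⟪v, tbar⟫)
    (Δ₀ : EuclideanSpace ℝ (Fin k)) :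
    kliepLoss tbar t (Δ₀ + v) < kliepLoss tbar t Δ₀ := by
  have hnpos : (0:ℝ) < (n:ℝ) := by exact_mod_cast hn
  set c : ℝ := ⟪v, tbar⟫
  have key : ∑ j, Real.exp ⟪Δ₀ + v, t j⟫ <
      Real.exp c * ∑ j, Real.exp ⟪Δ₀, t j⟫ := by
    rw [Finset.mul_sum]
    apply Finset.sum_lt_sum
    · intro j _
      rw [inner_add_left, Real.exp_add, mul_comm (Real.exp ⟪Δ₀, t j⟫)]
      exact mul_le_mul_of_nonneg_right (Real.exp_le_exp.mpr (hle j)) (Real.exp_pos _).le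
    · refine ⟨j₀, Finset.mem_univ _, ?_⟩
      rw [inner_add_left, Real.exp_add, mul_comm (Real.exp ⟪Δ₀, t j₀⟫)]
      exact mul_lt_mul_of_pos_right (Real.exp_lt_exp.mpr hlt) (Real.exp_pos _)
  have hpos0 : (0:ℝ) < ∑ j, Real.exp ⟪Δ₀, t j⟫ := sum_exp_pos hn _
  have hpos1 : (0:ℝ) < ∑ j, Real.exp ⟪Δ₀ + v, t j⟫ := sum_exp_pos hn _
  unfold kliepLoss
  have hlog : Real.log ((1 / (n:ℝ)) * ∑ j, Real.exp ⟪Δ₀ + v, t j⟫) <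
      c + Real.log ((1 / (n:ℝ)) * ∑ j, Real.exp ⟪Δ₀, t j⟫) := by
    have heq : c + Real.log ((1 / (n:ℝ)) * ∑ j, Real.exp ⟪Δ₀, t j⟫)
        = Real.log (Real.exp c * ((1 / (n:ℝ)) * ∑ j, Real.exp ⟪Δ₀, t j⟫)) := by
      rw [Real.log_mul (Real.exp_ne_zero _) (by positivity), Real.log_exp]
    rw [heq]
    apply Real.log_lt_log (by positivity)
    have : (0:ℝ) < 1 / (n:ℝ) := by positivity
    nlinarith
  have hadd : ⟪Δ₀ + v, tbar⟫ = ⟪Δ₀, tbar⟫ + c := by rw [inner_add_left]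
  rw [hadd]
  linarith

end Aux3

section Topo

private lemma intrinsic_eq_interior {V : Type*} [NormedAddCommGroup V] [NormedSpace ℝ V]
    {s : Set V} (h : affineSpan ℝ s = ⊤) : intrinsicInterior ℝ s = interior s := by
  refine Set.Subset.antisymm ?_ interior_subset_intrinsicInterior
  rintro x ⟨y, hy, rfl⟩
  have hopen : IsOpen ((affineSpan ℝ s : Set V)) := by
    rw [h]; simp only [AffineSubspace.top_coe]; exact isOpen_univ
  have hmap : IsOpenMap ((↑) : (affineSpan ℝ s : Set V) → V) := hopen.isOpenMap_subtype_val
  have hsub : ((↑) : (affineSpan ℝ s : Set V) → V) '' interior (((↑) : (affineSpan ℝ s : Set V) → V) ⁻¹' s) ⊆ interior s := by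
    refine interior_maximal (s := s) ?_ (hmap _ isOpen_interior)
    rintro z ⟨u, hu, rfl⟩
    have h2 : u ∈ (((↑) : (affineSpan ℝ s : Set V) → V) ⁻¹' s) := interior_subset hu
    exact h2
  exact hsub ⟨y, hy, rfl⟩

variable {k n : ℕ} (tbar : EuclideanSpace ℝ (Fin k)) (t : Fin n → EuclideanSpace ℝ (Fin k))

private noncomputable def sd : Fin n → EuclideanSpace ℝ (Fin k) := fun j => t j - tbar

private noncomputable def Wsp : Submodule ℝ (EuclideanSpace ℝ (Fin k)) :=
  Submodule.span ℝ (Set.range (sd tbar t))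

private noncomputable def sW : Fin n → Wsp tbar t := fun j =>
  ⟨sd tbar t j, Submodule.subset_span (Set.mem_range_self j)⟩

private lemma coe_image_hull :
    ((↑) : Wsp tbar t → EuclideanSpace ℝ (Fin k)) '' (convexHull ℝ (Set.range (sW tbar t)))
      = convexHull ℝ (Set.range (sd tbar t)) := by
  have h1 := (Wsp tbar t).subtype.image_convexHull (Set.range (sW tbar t))
  have h2 : ((Wsp tbar t).subtype : Wsp tbar t → EuclideanSpace ℝ (Fin k)) ''
      Set.range (sW tbar t) = Set.range (sd tbar t) := by
    rw [← Set.range_comp]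
    rfl
  rw [show ((↑) : Wsp tbar t → EuclideanSpace ℝ (Fin k)) = (Wsp tbar t).subtype from rfl,
    h1, h2]

private lemma bridge_translate :
    (tbar ∈ intrinsicInterior ℝ (convexHull ℝ (Set.range t)) ↔
      (0 : EuclideanSpace ℝ (Fin k)) ∈ intrinsicInterior ℝ
        (convexHull ℝ (Set.range (sd tbar t)))) ∧
    (tbar ∈ convexHull ℝ (Set.range t) ↔
      (0 : EuclideanSpace ℝ (Fin k)) ∈ convexHull ℝ (Set.range (sd tbar t))) := by
  set e : EuclideanSpace ℝ (Fin k) ≃ᵃⁱ[ℝ] EuclideanSpace ℝ (Fin k) :=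
    AffineIsometryEquiv.constVAdd ℝ (EuclideanSpace ℝ (Fin k)) (-tbar) with he
  have hecoe : ∀ z, e z = -tbar + z := fun z => rfl
  have himg : e '' (convexHull ℝ (Set.range t)) = convexHull ℝ (Set.range (sd tbar t)) := by
    have : (e : EuclideanSpace ℝ (Fin k) → EuclideanSpace ℝ (Fin k)) ''
        (convexHull ℝ (Set.range t)) = convexHull ℝ (e '' Set.range t) :=
      e.toAffineIsometry.toAffineMap.image_convexHull (Set.range t)
    rw [this]
    congr 1
    rw [← Set.range_comp]
    refine congrArg _ (funext fun j => ?_)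
    show -tbar + t j = t j - tbar
    abel
  have hint : intrinsicInterior ℝ (convexHull ℝ (Set.range (sd tbar t)))
      = e '' intrinsicInterior ℝ (convexHull ℝ (Set.range t)) := by
    rw [← himg]
    exact e.toAffineIsometry.image_intrinsicInterior _
  have h0 : e tbar = 0 := by rw [hecoe]; abel
  constructor
  · rw [hint]
    constructor
    · intro h; exact ⟨tbar, h, h0⟩
    · rintro ⟨z, hz, hez⟩
      have : z = tbar := by
        have := e.injective (hez.trans h0.symm)
        exact this
      rwa [this] at hz
  · rw [← himg]
    constructor
    · intro h; exact ⟨tbar, h, h0⟩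
    · rintro ⟨z, hz, hez⟩
      have : z = tbar := e.injective (hez.trans h0.symm)
      rwa [this] at hz

end Topo

section Span

variable {k n : ℕ} {tbar : EuclideanSpace ℝ (Fin k)} {t : Fin n → EuclideanSpace ℝ (Fin k)}

private lemma zero_mem_hull (hx : tbar ∈ convexHull ℝ (Set.range t)) :
    (0 : EuclideanSpace ℝ (Fin k)) ∈ convexHull ℝ (Set.range (sd tbar t)) :=
  ((bridge_translate tbar t).2).mp hx

private lemma zero_mem_hullW (hx : tbar ∈ convexHull ℝ (Set.range t)) :
    (0 : Wsp tbar t) ∈ convexHull ℝ (Set.range (sW tbar t)) := by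
  have h0 := zero_mem_hull hx
  rw [← coe_image_hull] at h0
  obtain ⟨y, hy, hy0⟩ := h0
  have hy' : y = 0 := Subtype.coe_injective (by simpa using hy0)
  rwa [hy'] at hy

private lemma coe_image_range :
    ((Wsp tbar t).subtype : Wsp tbar t → EuclideanSpace ℝ (Fin k)) ''
      Set.range (sW tbar t) = Set.range (sd tbar t) := by
  rw [← Set.range_comp]; rfl

private lemma span_sW_top :
    Submodule.span ℝ (Set.range (sW tbar t)) = ⊤ := by
  apply Submodule.map_injective_of_injective (Wsp tbar t).injective_subtype
  rw [Submodule.map_span, coe_image_range, Submodule.map_subtype_top]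
  rfl

private lemma affineSpan_sW_top (hx : tbar ∈ convexHull ℝ (Set.range t)) :
    affineSpan ℝ (Set.range (sW tbar t)) = ⊤ := by
  obtain ⟨w, hw₀, hw₁, hw⟩ := exists_weights hx
  have hsum0 : ∑ j, w j • sW tbar t j = 0 := by
    apply Subtype.coe_injective
    push_cast
    show ∑ j, w j • sd tbar t j = (0 : EuclideanSpace ℝ (Fin k))
    simp only [sd, smul_sub, Finset.sum_sub_distrib, ← Finset.sum_smul, hw₁, hw, one_smul,
      sub_self]
  have h0 : (0 : Wsp tbar t) ∈ affineSpan ℝ (Set.range (sW tbar t)) :=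
    convexHull_subset_affineSpan _ (zero_mem_hullW hx)
  have hmemvs : ∀ j, sW tbar t j ∈ vectorSpan ℝ (Set.range (sW tbar t)) := by
    intro j
    have hrepr : sW tbar t j = ∑ i, w i • (sW tbar t j - sW tbar t i) := by
      simp only [smul_sub, Finset.sum_sub_distrib, ← Finset.sum_smul, hw₁, hsum0, one_smul,
        sub_zero]
    rw [hrepr]
    refine Submodule.sum_mem _ (fun i _ => Submodule.smul_mem _ _ ?_)
    exact vsub_mem_vectorSpan ℝ (Set.mem_range_self j) (Set.mem_range_self i)
  have hvs : vectorSpan ℝ (Set.range (sW tbar t)) = ⊤ := by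
    rw [eq_top_iff, ← span_sW_top (tbar := tbar) (t := t)]
    refine Submodule.span_le.mpr ?_
    rintro z ⟨j, rfl⟩
    exact hmemvs j
  rw [eq_top_iff]
  rintro z -
  have hz : z ∈ (affineSpan ℝ (Set.range (sW tbar t))).direction := by
    rw [direction_affineSpan, hvs]; trivial
  have := AffineSubspace.vadd_mem_of_mem_direction hz h0
  simpa using this

private lemma bridge (hx : tbar ∈ convexHull ℝ (Set.range t)) :
    tbar ∈ intrinsicInterior ℝ (convexHull ℝ (Set.range t)) ↔
      (0 : Wsp tbar t) ∈ interior (convexHull ℝ (Set.range (sW tbar t))) := by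
  rw [(bridge_translate tbar t).1]
  set φ := (Wsp tbar t).subtypeₗᵢ.toAffineIsometry with hφ
  have h1 : convexHull ℝ (Set.range (sd tbar t)) =
      φ '' (convexHull ℝ (Set.range (sW tbar t))) := (coe_image_hull tbar t).symm
  rw [h1, φ.image_intrinsicInterior]
  rw [intrinsic_eq_interior (by rw [affineSpan_convexHull]; exact affineSpan_sW_top hx)]
  constructor
  · rintro ⟨y, hy, hy0⟩
    have hy0' : (y : EuclideanSpace ℝ (Fin k)) = 0 := hy0
    have hy' : y = 0 := Subtype.coe_injective (by simpa using hy0')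
    rwa [hy'] at hy
  · intro h
    refine ⟨0, h, ?_⟩
    show ((0 : Wsp tbar t) : EuclideanSpace ℝ (Fin k)) = 0
    simp

end Span

section Char

variable {k n : ℕ} {tbar : EuclideanSpace ℝ (Fin k)} {t : Fin n → EuclideanSpace ℝ (Fin k)}

private lemma hull_le_halfspace {v : EuclideanSpace ℝ (Fin k)}
    (hle : ∀ j, ⟪v, sd tbar t j⟫ ≤ 0) :
    ∀ z ∈ convexHull ℝ (Set.range (sd tbar t)), ⟪v, z⟫ ≤ 0 := by
  intro z hz
  have hlin : IsLinearMap ℝ (fun z : EuclideanSpace ℝ (Fin k) => ⟪v, z⟫) :=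
    ⟨fun a b => inner_add_right v a b, fun c a => real_inner_smul_right v a c⟩
  have hconv : Convex ℝ {z : EuclideanSpace ℝ (Fin k) | ⟪v, z⟫ ≤ 0} :=
    convex_halfSpace_le hlin 0
  exact convexHull_min (by rintro _ ⟨j, rfl⟩; exact hle j) hconv hz

private lemma char_of_mem_interior
    (h0 : (0 : Wsp tbar t) ∈ interior (convexHull ℝ (Set.range (sW tbar t))))
    {v : EuclideanSpace ℝ (Fin k)} (hle : ∀ j, ⟪v, t j⟫ ≤ ⟪v, tbar⟫) :
    ∀ j, ⟪v, t j⟫ = ⟪v, tbar⟫ := by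
  haveI : CompleteSpace (Wsp tbar t) := FiniteDimensional.complete ℝ _
  set vW := (Wsp tbar t).orthogonalProjectionOnto v with hvWdef
  have hle' : ∀ j, ⟪v, sd tbar t j⟫ ≤ 0 := fun j => by
    show ⟪v, t j - tbar⟫ ≤ 0
    rw [inner_sub_right]; linarith [hle j]
  have hproj : ∀ w : Wsp tbar t, ⟪v, (w : EuclideanSpace ℝ (Fin k))⟫
      = ⟪((vW : Wsp tbar t) : EuclideanSpace ℝ (Fin k)), (w : EuclideanSpace ℝ (Fin k))⟫ := by
    intro w
    have : ⟪v - ((vW : Wsp tbar t) : EuclideanSpace ℝ (Fin k)), (w : EuclideanSpace ℝ (Fin k))⟫ = 0 :=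
      Submodule.starProjection_inner_eq_zero (K := Wsp tbar t) v (w : EuclideanSpace ℝ (Fin k)) w.2
    rw [inner_sub_left] at this
    linarith
  by_cases hvW : ((vW : Wsp tbar t) : EuclideanSpace ℝ (Fin k)) = 0
  · intro j
    have h1 : ⟪v, sd tbar t j⟫ = 0 := by
      rw [show sd tbar t j = ((sW tbar t j : Wsp tbar t) : EuclideanSpace ℝ (Fin k)) from rfl,
        hproj, hvW, inner_zero_left]
    have : ⟪v, t j - tbar⟫ = 0 := h1
    rw [inner_sub_right] at this
    linarith
  · exfalso
    obtain ⟨ε, hε, hball⟩ := Metric.mem_nhds_iff.mp (mem_interior_iff_mem_nhds.mp h0)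
    have hnpos : 0 < ‖((vW : Wsp tbar t) : EuclideanSpace ℝ (Fin k))‖ := norm_pos_iff.mpr hvW
    set c : ℝ := ε / (2 * ‖((vW : Wsp tbar t) : EuclideanSpace ℝ (Fin k))‖) with hc
    have hcpos : 0 < c := by positivity
    have hnorm_eq : ‖(vW : Wsp tbar t)‖ = ‖((vW : Wsp tbar t) : EuclideanSpace ℝ (Fin k))‖ := rfl
    have hy : (c • (vW : Wsp tbar t)) ∈ Metric.ball (0 : Wsp tbar t) ε := by
      rw [Metric.mem_ball, dist_zero_right, norm_smul, hnorm_eq, Real.norm_eq_abs,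
        abs_of_pos hcpos, hc, div_mul_eq_mul_div, div_lt_iff₀ (by positivity)]
      nlinarith
    have hyK := hball hy
    have hmem : ((c • (vW : Wsp tbar t) : Wsp tbar t) : EuclideanSpace ℝ (Fin k))
        ∈ convexHull ℝ (Set.range (sd tbar t)) := by
      rw [← coe_image_hull]
      exact ⟨_, hyK, rfl⟩
    have hle0 := hull_le_halfspace hle' _ hmem
    have hcoe : ((c • (vW : Wsp tbar t) : Wsp tbar t) : EuclideanSpace ℝ (Fin k))
        = c • ((vW : Wsp tbar t) : EuclideanSpace ℝ (Fin k)) := rfl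
    rw [hcoe, real_inner_smul_right, hproj] at hle0
    have hself : (0:ℝ) < ⟪((vW : Wsp tbar t) : EuclideanSpace ℝ (Fin k)),
        ((vW : Wsp tbar t) : EuclideanSpace ℝ (Fin k))⟫ := by
      rw [real_inner_self_eq_norm_mul_norm]
      positivity
    nlinarith

private lemma mem_interior_of_char (hn : 1 ≤ n)
    (hx : tbar ∈ convexHull ℝ (Set.range t))
    (hchar : ∀ v : EuclideanSpace ℝ (Fin k),
      (∀ j, ⟪v, t j⟫ ≤ ⟪v, tbar⟫) → ∀ j, ⟪v, t j⟫ = ⟪v, tbar⟫) :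
    (0 : Wsp tbar t) ∈ interior (convexHull ℝ (Set.range (sW tbar t))) := by
  haveI : CompleteSpace (Wsp tbar t) := FiniteDimensional.complete ℝ _
  by_contra h0
  set K := convexHull ℝ (Set.range (sW tbar t)) with hK
  have hKconv : Convex ℝ K := convex_convexHull ℝ _
  obtain ⟨f, hf⟩ := geometric_hahn_banach_open_point hKconv.interior isOpen_interior h0
  have hne : (interior K).Nonempty := by
    have hKne : K.Nonempty :=
      ⟨sW tbar t ⟨0, hn⟩, subset_convexHull _ _ (Set.mem_range_self _)⟩
    have h := Set.Nonempty.intrinsicInterior hKconv hKne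
    rwa [intrinsic_eq_interior
      (by rw [hK, affineSpan_convexHull]; exact affineSpan_sW_top hx)] at h
  obtain ⟨y, hy⟩ := hne
  have hfy : f y < 0 := by simpa using hf y hy
  have hKle : ∀ x ∈ K, f x ≤ 0 := by
    intro x hxK
    by_contra hpos
    push_neg at hpos
    obtain ⟨τ, hτ⟩ : ∃ τ : ℝ, τ = 1 + f x / (2 * (-f y)) := ⟨_, rfl⟩
    have hτ1 : 1 < τ := by
      have h2 : 0 < f x / (2 * (-f y)) := div_pos hpos (by linarith)
      rw [hτ]; linarith
    have hsub := hKconv.closure_subset_image_homothety_interior_of_one_lt hy τ hτ1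
    obtain ⟨z, hz, hzx⟩ := hsub (subset_closure hxK)
    have hfz : f z < 0 := by simpa using hf z hz
    have hfx : f x = τ * f z + (1 - τ) * f y := by
      rw [← hzx]
      simp only [AffineMap.homothety_apply, vsub_eq_sub, vadd_eq_add, map_add, map_smul,
        map_sub, smul_eq_mul]
      ring
    have hkey : (τ - 1) * (-f y) = f x / 2 := by
      rw [hτ]
      have hy0 : f y ≠ 0 := by linarith
      field_simp
      ring
    have h5 : (1 - τ) * f y = f x / 2 := by linear_combination hkey
    have hτfz : τ * f z < 0 := mul_neg_of_pos_of_neg (by linarith) hfz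
    linarith
  set vW := (InnerProductSpace.toDual ℝ (Wsp tbar t)).symm f with hvW
  have hv : ∀ z : Wsp tbar t, ⟪vW, z⟫ = f z := fun z =>
    InnerProductSpace.toDual_symm_apply
  have hinnercoe : ∀ j, ⟪(vW : EuclideanSpace ℝ (Fin k)), sd tbar t j⟫ = f (sW tbar t j) := by
    intro j
    rw [← hv]
    exact ((Wsp tbar t).coe_inner vW (sW tbar t j)).symm
  have hvle : ∀ j, ⟪(vW : EuclideanSpace ℝ (Fin k)), t j⟫
      ≤ ⟪(vW : EuclideanSpace ℝ (Fin k)), tbar⟫ := by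
    intro j
    have h1 : ⟪(vW : EuclideanSpace ℝ (Fin k)), t j - tbar⟫ = f (sW tbar t j) := hinnercoe j
    have h2 : f (sW tbar t j) ≤ 0 := hKle _ (subset_convexHull _ _ (Set.mem_range_self j))
    rw [inner_sub_right] at h1
    linarith
  have heq := hchar _ hvle
  have hf0 : ∀ j, f (sW tbar t j) = 0 := by
    intro j
    rw [← hinnercoe j]
    show ⟪(vW : EuclideanSpace ℝ (Fin k)), t j - tbar⟫ = 0
    rw [inner_sub_right, heq j, sub_self]
  have hker : Submodule.span ℝ (Set.range (sW tbar t)) ≤ LinearMap.ker (f : Wsp tbar t →ₗ[ℝ] ℝ) := by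
    refine Submodule.span_le.mpr ?_
    rintro _ ⟨j, rfl⟩
    exact hf0 j
  rw [span_sW_top] at hker
  have : f y = 0 := hker (Set.mem_univ y : y ∈ (⊤ : Submodule ℝ (Wsp tbar t)))
  linarith

private lemma relint_iff_char (hn : 1 ≤ n) (hx : tbar ∈ convexHull ℝ (Set.range t)) :
    tbar ∈ intrinsicInterior ℝ (convexHull ℝ (Set.range t)) ↔
      ∀ v : EuclideanSpace ℝ (Fin k),
        (∀ j, ⟪v, t j⟫ ≤ ⟪v, tbar⟫) → ∀ j, ⟪v, t j⟫ = ⟪v, tbar⟫ := by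
  rw [bridge hx]
  exact ⟨fun h0 v hle => char_of_mem_interior h0 hle,
    fun h => mem_interior_of_char hn hx h⟩

end Char

section Min

variable {k n : ℕ} {tbar : EuclideanSpace ℝ (Fin k)} {t : Fin n → EuclideanSpace ℝ (Fin k)}

set_option maxHeartbeats 1000000 in
private lemma exists_min (hn : 1 ≤ n) (hx : tbar ∈ convexHull ℝ (Set.range t))
    (hchar : ∀ v : EuclideanSpace ℝ (Fin k),
      (∀ j, ⟪v, t j⟫ ≤ ⟪v, tbar⟫) → ∀ j, ⟪v, t j⟫ = ⟪v, tbar⟫) :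
    ∃ Δ₀, ∀ Δ, kliepLoss tbar t Δ₀ ≤ kliepLoss tbar t Δ := by
  haveI : Nonempty (Fin n) := fin_nonempty hn
  haveI : CompleteSpace (Wsp tbar t) := FiniteDimensional.complete ℝ _
  have hnpos : (0:ℝ) < (n:ℝ) := by exact_mod_cast hn
  set g : EuclideanSpace ℝ (Fin k) → ℝ :=
    fun Δ => Real.log ((1/(n:ℝ)) * ∑ j, Real.exp ⟪Δ, t j - tbar⟫) with hg
  have hkg : ∀ Δ, kliepLoss tbar t Δ = g Δ := kliepLoss_eq_log hn tbar t
  suffices h : ∃ Δ₀, ∀ Δ, g Δ₀ ≤ g Δ by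
    obtain ⟨Δ₀, hΔ₀⟩ := h
    exact ⟨Δ₀, fun Δ => by rw [hkg, hkg]; exact hΔ₀ Δ⟩
  have hglb : ∀ (Δ : EuclideanSpace ℝ (Fin k)) (j : Fin n),
      ⟪Δ, t j - tbar⟫ - Real.log n ≤ g Δ := by
    intro Δ j
    have h1 : Real.exp ⟪Δ, t j - tbar⟫ ≤ ∑ i, Real.exp ⟪Δ, t i - tbar⟫ :=
      Finset.single_le_sum (f := fun i => Real.exp ⟪Δ, t i - tbar⟫)
        (fun i _ => (Real.exp_pos _).le) (Finset.mem_univ j)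
    have heq : ⟪Δ, t j - tbar⟫ - Real.log n
        = Real.log ((1/(n:ℝ)) * Real.exp ⟪Δ, t j - tbar⟫) := by
      rw [Real.log_mul (by positivity) (Real.exp_ne_zero _), Real.log_exp, one_div,
        Real.log_inv]
      ring
    rw [heq]
    apply Real.log_le_log (by positivity)
    have h2 : (0:ℝ) < 1/(n:ℝ) := by positivity
    nlinarith
  by_cases hall : ∀ j, t j = tbar
  · refine ⟨0, fun Δ => le_of_eq ?_⟩
    have hzero : ∀ Δ : EuclideanSpace ℝ (Fin k),
        g Δ = Real.log ((1/(n:ℝ)) * n) := by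
      intro Δ
      have h2 : ∀ j : Fin n, Real.exp ⟪Δ, t j - tbar⟫ = 1 := fun j => by
        rw [hall j, sub_self, inner_zero_right, Real.exp_zero]
      rw [hg]
      simp only [h2, Finset.sum_const, Finset.card_univ, Fintype.card_fin, nsmul_eq_mul,
        mul_one]
    rw [hzero, hzero]
  · push_neg at hall
    obtain ⟨j₀, hj₀⟩ := hall
    have hpos : ∀ Δ : EuclideanSpace ℝ (Fin k),
        0 < (1/(n:ℝ)) * ∑ j, Real.exp ⟪Δ, t j - tbar⟫ := fun Δ => by
      have := sum_exp_pos hn (fun j => ⟪Δ, t j - tbar⟫)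
      positivity
  -- continuity of g
    have hsum : Continuous fun Δ : EuclideanSpace ℝ (Fin k) =>
        (1/(n:ℝ)) * ∑ j, Real.exp ⟪Δ, t j - tbar⟫ := by
      apply Continuous.mul continuous_const
      apply continuous_finset_sum
      intro j _
      exact Real.continuous_exp.comp (continuous_id.inner continuous_const)
    have hcont : Continuous g := by
      rw [hg]
      exact hsum.log fun Δ => ne_of_gt (hpos Δ)
    have hdir : ∀ w : Wsp tbar t, w ≠ 0 → ∃ j, 0 < ⟪(w : EuclideanSpace ℝ (Fin k)), t j - tbar⟫ := by
      intro w hw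
      by_contra hno
      push_neg at hno
      have hle : ∀ j, ⟪(w : EuclideanSpace ℝ (Fin k)), t j⟫
          ≤ ⟪(w : EuclideanSpace ℝ (Fin k)), tbar⟫ := fun j => by
        have := hno j
        rw [inner_sub_right] at this
        linarith
      have heq := hchar _ hle
      have hzero : ∀ j, ⟪(w : EuclideanSpace ℝ (Fin k)), sd tbar t j⟫ = 0 := fun j => by
        show ⟪(w : EuclideanSpace ℝ (Fin k)), t j - tbar⟫ = 0
        rw [inner_sub_right, heq j, sub_self]
      have hsp : ∀ z ∈ Submodule.span ℝ (Set.range (sd tbar t)),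
          ⟪(w : EuclideanSpace ℝ (Fin k)), z⟫ = 0 := by
        intro z hz
        induction hz using Submodule.span_induction with
        | mem x hxx => obtain ⟨j, rfl⟩ := hxx; exact hzero j
        | zero => exact inner_zero_right _
        | add x y _ _ hx1 hy1 => rw [inner_add_right, hx1, hy1, add_zero]
        | smul c x _ hx1 => rw [real_inner_smul_right, hx1, mul_zero]
      have hww : ⟪(w : EuclideanSpace ℝ (Fin k)), (w : EuclideanSpace ℝ (Fin k))⟫ = 0 :=
        hsp _ w.2
      exact hw (Subtype.coe_injective (by simpa using inner_self_eq_zero.mp hww))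
    -- the sphere and minimum of F
    have hScomp : IsCompact (Metric.sphere (0 : Wsp tbar t) 1) := isCompact_sphere _ _
    have hsWne : sW tbar t j₀ ≠ 0 := by
      intro h
      apply hj₀
      have h2 : sd tbar t j₀ = 0 := congrArg Subtype.val h
      have h3 : t j₀ - tbar = 0 := h2
      rw [sub_eq_zero] at h3
      exact h3
    have hSne : (Metric.sphere (0 : Wsp tbar t) 1).Nonempty := by
      refine ⟨(‖sW tbar t j₀‖)⁻¹ • sW tbar t j₀, ?_⟩
      have hn0 : ‖sW tbar t j₀‖ ≠ 0 := norm_ne_zero_iff.mpr hsWne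
      rw [mem_sphere_iff_norm, sub_zero, norm_smul, norm_inv, norm_norm,
        inv_mul_cancel₀ hn0]
    set F : Wsp tbar t → ℝ :=
      fun w => Finset.univ.sup' Finset.univ_nonempty
        (fun j => ⟪(w : EuclideanSpace ℝ (Fin k)), t j - tbar⟫) with hF
    have hFcont : Continuous F := by
      rw [continuous_iff_continuousAt]
      intro w
      rw [hF]
      apply ContinuousAt.finset_sup'_apply Finset.univ_nonempty
      intro j _
      exact ((continuous_subtype_val.inner continuous_const)).continuousAt
    obtain ⟨w₁, hw₁S, hw₁min⟩ := hScomp.exists_isMinOn hSne hFcont.continuousOn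
    have hεpos : 0 < F w₁ := by
      have hw₁ne : w₁ ≠ 0 := by
        intro h
        rw [h, mem_sphere_iff_norm, sub_zero, norm_zero] at hw₁S
        norm_num at hw₁S
      obtain ⟨j, hj⟩ := hdir w₁ hw₁ne
      have := Finset.le_sup' (fun j => ⟪(w₁ : EuclideanSpace ℝ (Fin k)), t j - tbar⟫)
        (Finset.mem_univ j)
      calc (0:ℝ) < ⟪(w₁ : EuclideanSpace ℝ (Fin k)), t j - tbar⟫ := hj
      _ ≤ F w₁ := this
    have hcoer : ∀ w : Wsp tbar t, F w₁ * ‖w‖ - Real.log n ≤ g ↑w := by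
      intro w
      rcases eq_or_ne w 0 with rfl | hw
      · have h8 := hglb ((0 : Wsp tbar t) : EuclideanSpace ℝ (Fin k)) j₀
        have hz : ⟪((0 : Wsp tbar t) : EuclideanSpace ℝ (Fin k)), t j₀ - tbar⟫ = (0:ℝ) := by
          rw [ZeroMemClass.coe_zero, inner_zero_left]
        rw [hz] at h8
        rw [norm_zero, mul_zero]
        linarith
      · have hwn : ‖w‖ ≠ 0 := norm_ne_zero_iff.mpr hw
        set u : Wsp tbar t := (‖w‖)⁻¹ • w with hu
        have huS : u ∈ Metric.sphere (0 : Wsp tbar t) 1 := by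
          rw [mem_sphere_iff_norm, sub_zero, hu, norm_smul, norm_inv, norm_norm,
            inv_mul_cancel₀ hwn]
        have huF : F w₁ ≤ F u := hw₁min huS
        obtain ⟨j, _, hj⟩ := Finset.exists_mem_eq_sup' Finset.univ_nonempty
          (fun j => ⟪(u : EuclideanSpace ℝ (Fin k)), t j - tbar⟫)
        have hju : F w₁ ≤ ⟪(u : EuclideanSpace ℝ (Fin k)), t j - tbar⟫ := by
          rw [← hj]; exact huF
        have hwu : (w : EuclideanSpace ℝ (Fin k))
            = ‖w‖ • (u : EuclideanSpace ℝ (Fin k)) := by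
          rw [hu]
          push_cast
          rw [smul_smul, mul_inv_cancel₀ hwn, one_smul]
        have hsmul : ⟪(w : EuclideanSpace ℝ (Fin k)), t j - tbar⟫
            = ‖w‖ * ⟪(u : EuclideanSpace ℝ (Fin k)), t j - tbar⟫ := by
          rw [hwu, real_inner_smul_left]
        have h6 := hglb (↑w) j
        have h7 : F w₁ * ‖w‖ ≤ ⟪(w : EuclideanSpace ℝ (Fin k)), t j - tbar⟫ := by
          rw [hsmul, mul_comm (F w₁)]
          exact mul_le_mul_of_nonneg_left hju (norm_nonneg _)
        linarith
    -- compactness on closed ball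
    have hg0 : -Real.log n ≤ g 0 := by
      have := hglb 0 j₀
      rw [inner_zero_left] at this
      linarith
    set R : ℝ := (g 0 + Real.log n + 1)/(F w₁) with hR
    have hRpos : 0 < R := by
      rw [hR]
      apply div_pos (by linarith) hεpos
    have hBcomp : IsCompact (Metric.closedBall (0 : Wsp tbar t) R) := isCompact_closedBall _ _
    have hBne : (Metric.closedBall (0 : Wsp tbar t) R).Nonempty :=
      ⟨0, by simp [Metric.mem_closedBall, hRpos.le]⟩
    have hgW : Continuous fun w : Wsp tbar t => g ↑w := hcont.comp continuous_subtype_val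
    obtain ⟨w₀, hw₀B, hw₀min⟩ := hBcomp.exists_isMinOn hBne hgW.continuousOn
    refine ⟨↑w₀, fun Δ => ?_⟩
    set p : Wsp tbar t := (Wsp tbar t).orthogonalProjectionOnto Δ with hp
    have hgp : g Δ = g ↑p := by
      rw [hg]
      have hinner : ∀ j, ⟪Δ, t j - tbar⟫
          = ⟪(p : EuclideanSpace ℝ (Fin k)), t j - tbar⟫ := by
        intro j
        have hmem : t j - tbar ∈ Wsp tbar t :=
          Submodule.subset_span (Set.mem_range_self j)
        have : ⟪Δ - (p : EuclideanSpace ℝ (Fin k)), t j - tbar⟫ = 0 :=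
          Submodule.starProjection_inner_eq_zero (K := Wsp tbar t) Δ (t j - tbar) hmem
        rw [inner_sub_left] at this
        linarith
      simp only [hinner]
    rcases le_or_gt ‖p‖ R with hpR | hpR
    · rw [hgp]
      exact hw₀min (by rwa [Metric.mem_closedBall, dist_zero_right])
    · have h1 := hcoer p
      have h2 : g ↑w₀ ≤ g ((0 : Wsp tbar t) : EuclideanSpace ℝ (Fin k)) :=
        hw₀min (by simp [Metric.mem_closedBall, hRpos.le])
      have h3 : ((0 : Wsp tbar t) : EuclideanSpace ℝ (Fin k)) = 0 := rfl
      have h4 : F w₁ * R < F w₁ * ‖p‖ := by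
        exact mul_lt_mul_of_pos_left hpR hεpos
      have h5 : F w₁ * R = g 0 + Real.log n + 1 := by
        rw [hR]
        field_simp
      rw [h3] at h2
      rw [hgp]
      linarith

end Min

/-- Theorem 1(ii): `t̄ ∈ relbd(C)` (i.e. `t̄ ∈ C \ relint(C)`) iff the empirical KLIEP loss
is bounded from below but does not attain a global minimum. -/
theorem kliep_bddBelow_not_attained_iff_relbd {k n : ℕ} (hk : 1 ≤ k) (hn : 1 ≤ n)
    (tbar : EuclideanSpace ℝ (Fin k)) (t : Fin n → EuclideanSpace ℝ (Fin k)) :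
    tbar ∈ convexHull ℝ (Set.range t) \ intrinsicInterior ℝ (convexHull ℝ (Set.range t)) ↔
      ((∃ M : ℝ, ∀ Δ : EuclideanSpace ℝ (Fin k), M ≤ kliepLoss tbar t Δ) ∧
        ¬ ∃ Δ₀ : EuclideanSpace ℝ (Fin k), ∀ Δ : EuclideanSpace ℝ (Fin k),
            kliepLoss tbar t Δ₀ ≤ kliepLoss tbar t Δ) := by
  constructor
  · rintro ⟨hxC, hxnot⟩
    refine ⟨⟨-Real.log n, kliepLoss_bddBelow hn tbar t hxC⟩, ?_⟩
    rintro ⟨Δ₀, hΔ₀⟩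
    have hchar : ¬ ∀ v : EuclideanSpace ℝ (Fin k),
        (∀ j, ⟪v, t j⟫ ≤ ⟪v, tbar⟫) → ∀ j, ⟪v, t j⟫ = ⟪v, tbar⟫ := by
      intro h
      exact hxnot ((relint_iff_char hn hxC).mpr h)
    push_neg at hchar
    obtain ⟨v, hle, j₀, hne⟩ := hchar
    have hlt : ⟪v, t j₀⟫ < ⟪v, tbar⟫ := lt_of_le_of_ne (hle j₀) hne
    exact absurd (hΔ₀ (Δ₀ + v))
      (not_le.mpr (kliepLoss_strict_decrease hn hle hlt Δ₀))
  · rintro ⟨⟨M, hM⟩, hnot⟩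
    have hxC : tbar ∈ convexHull ℝ (Set.range t) := by
      by_contra hC
      obtain ⟨Δ, hΔ⟩ := kliepLoss_unbounded hn hC M
      exact absurd (hM Δ) (not_le.mpr hΔ)
    refine ⟨hxC, fun hint => hnot ?_⟩
    exact exists_min hn hxC ((relint_iff_char hn hxC).mp hint)
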